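/- Let γ_1, γ_2 be tangent reduced real analytic demi-branches at 0 ∈ ℝ², presented in common coordinates (x,y) as γ_i(t) = (φ_i(t), t^{m_i}), and let γ'_i(t) = (φ'_i(t), t^{m_i}) be presentations of the same demi-branches in another coordinate system, i.e. γ'_i = Ψ ∘ γ_i ∘ σ_i where Ψ is a real analytic diffeomorphism germ of (ℝ²,0) and σ_i are real analytic diffeomorphism germs of (ℝ,0) with σ_i'(0) > 0. Then O(γ'_1, γ'_2) = O(γ_1, γ_2): the contact order between two real analytic demi-branches is well defined, independent of their Puiseux presentations. -/

import Mathlib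

open Filter Topology

/-- `φ` is, near `0`, the sum of the convergent real power series with coefficients `a`. -/
def HasPS (a : ℕ → ℝ) (φ : ℝ → ℝ) : Prop :=
  ∃ r > (0 : ℝ), ∀ t : ℝ, |t| < r → HasSum (fun j => a j * t ^ j) (φ t)

/-- `(m, a)` is the coefficient data of a presentation `γ(t) = (φ(t), t^m)`, `t ≥ 0`,
of a reduced real analytic demi-branch at `0 ∈ ℝ²`. -/
def IsPres (m : ℕ) (a : ℕ → ℝ) : Prop :=
  0 < m ∧ (∀ j < m, a j = 0) ∧ ∀ d : ℕ, d ∣ m → (∀ j, a j ≠ 0 → d ∣ j) → d = 1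

/-- Two demi-branches are tangent if they have the same unit tangent direction at the origin. -/
def Tangent (γ₁ γ₂ : ℝ → ℝ × ℝ) : Prop :=
  ∃ v : ℝ × ℝ,
    Tendsto (fun t => ‖γ₁ t‖⁻¹ • γ₁ t) (𝓝[>] (0 : ℝ)) (𝓝 v) ∧
    Tendsto (fun t => ‖γ₂ t‖⁻¹ • γ₂ t) (𝓝[>] (0 : ℝ)) (𝓝 v)

/-- Coefficients of `t ↦ φ(t^k)` in terms of those of `φ`. -/
def stretch (k : ℕ) (a : ℕ → ℝ) : ℕ → ℝ := fun j => if k ∣ j then a (j / k) else 0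

/-- The contact order `O(γ₁,γ₂) = (1/M)·ord_s (φ₁(s^{M/m₁}) − φ₂(s^{M/m₂}))`, `M = lcm m₁ m₂`,
of two demi-branches `γᵢ(t) = (φᵢ(t), t^{mᵢ})` presented in the same coordinates. -/
noncomputable def contactOrd (m₁ m₂ : ℕ) (a₁ a₂ : ℕ → ℝ) : ℚ :=
  ((sInf {j : ℕ | stretch (Nat.lcm m₁ m₂ / m₁) a₁ j ≠ stretch (Nat.lcm m₁ m₂ / m₂) a₂ j} : ℕ) : ℚ)
    / (Nat.lcm m₁ m₂ : ℚ)

set_option maxHeartbeats 2000000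

/-- Basic data extracted from a convergent power series: a radius `ρ ∈ (0,1]` on whose
closed interval the series is absolutely summable with bound, and sums to `φ`. -/
lemma HasPS.data {a : ℕ → ℝ} {φ : ℝ → ℝ} (h : HasPS a φ) :
    ∃ ρ : ℝ, 0 < ρ ∧ ρ ≤ 1 ∧ Summable (fun j => |a j| * ρ ^ j) ∧
      ∀ t : ℝ, |t| ≤ ρ → HasSum (fun j => a j * t ^ j) (φ t) := by
  obtain ⟨r, hr, hsum⟩ := h
  refine ⟨min (r/2) 1, by positivity, min_le_right _ _, ?_, ?_⟩
  · have h1 : |min (r/2) 1| < r := by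
      rw [abs_of_pos (by positivity)]
      calc min (r/2) 1 ≤ r/2 := min_le_left _ _
      _ < r := by linarith
    have := (hsum _ h1).summable
    rw [← summable_norm_iff] at this
    convert this using 2 with j
    simp [abs_mul, abs_pow, abs_of_pos (show (0:ℝ) < min (r/2) 1 by positivity)]
  · intro t ht
    refine hsum t (lt_of_le_of_lt ht ?_)
    calc min (r/2) 1 ≤ r/2 := min_le_left _ _
    _ < r := by linarith

/-- Tail bound: if the coefficients vanish below `N`, the sum is `O(s^N)` on `[0,ρ]`. -/
lemma tail_bound {b : ℕ → ℝ} {ρ : ℝ} (hρ : 0 < ρ)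
    (hsum : Summable (fun j => |b j| * ρ ^ j)) {N : ℕ} (hvan : ∀ j < N, b j = 0)
    {s S : ℝ} (hs : 0 ≤ s) (hsρ : s ≤ ρ)
    (hS : HasSum (fun j => b j * s ^ j) S) :
    |S| ≤ ((∑' j, |b j| * ρ ^ j) / ρ ^ N) * s ^ N := by
  have hterm : ∀ j, |b j * s ^ j| ≤ (|b j| * ρ ^ j) / ρ ^ N * s ^ N := by
    intro j
    rcases lt_or_ge j N with hj | hj
    · simp only [hvan j hj, zero_mul, abs_zero]
      positivity
    · rw [abs_mul, abs_pow, abs_of_nonneg hs]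
      have h1 : s ^ j ≤ s ^ N * ρ ^ (j - N) := by
        calc s ^ j = s ^ N * s ^ (j - N) := by rw [← pow_add]; congr 1; omega
        _ ≤ s ^ N * ρ ^ (j - N) := by
            apply mul_le_mul_of_nonneg_left (pow_le_pow_left₀ hs hsρ _) (by positivity)
      calc |b j| * s ^ j ≤ |b j| * (s ^ N * ρ ^ (j - N)) := by
            apply mul_le_mul_of_nonneg_left h1 (abs_nonneg _)
      _ = (|b j| * ρ ^ j) / ρ ^ N * s ^ N := by
            have hrj : ρ ^ j = ρ ^ (j - N) * ρ ^ N := by rw [← pow_add]; congr 1; omega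
            rw [hrj]
            field_simp
  have hmaj : Summable (fun j => (|b j| * ρ ^ j) / ρ ^ N * s ^ N) := by
    apply Summable.mul_right
    exact hsum.div_const _
  have hsum2 : Summable (fun j => |b j * s ^ j|) :=
    Summable.of_nonneg_of_le (fun j => abs_nonneg _) hterm hmaj
  calc |S| = ‖S‖ := rfl
  _ ≤ ∑' j, ‖b j * s ^ j‖ := by
      rw [← hS.tsum_eq]
      exact norm_tsum_le_tsum_norm hsum2
  _ ≤ ∑' j, (|b j| * ρ ^ j) / ρ ^ N * s ^ N := Summable.tsum_le_tsum hterm hsum2 hmaj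
  _ = ((∑' j, |b j| * ρ ^ j) / ρ ^ N) * s ^ N := by
      rw [tsum_mul_right, tsum_div_const]

/-- First-order asymptotics: if the first nonzero coefficient is at index `N`, then
`|ψ s| ≍ s^N` for small positive `s`. -/
lemma ord_asymp {b : ℕ → ℝ} {ψ : ℝ → ℝ} (hPS : HasPS b ψ) {N : ℕ}
    (hN : b N ≠ 0) (hvan : ∀ j < N, b j = 0) :
    ∃ ε > (0:ℝ), ∀ s : ℝ, 0 < s → s ≤ ε →
      (|b N| / 2) * s ^ N ≤ |ψ s| ∧ |ψ s| ≤ (|b N| + 1) * s ^ N := by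
  obtain ⟨ρ, hρ, hρ1, hsum, hrep⟩ := hPS.data
  set c : ℕ → ℝ := fun j => if j = N then 0 else b j with hc
  have hcsum : Summable (fun j => |c j| * ρ ^ j) := by
    apply Summable.of_nonneg_of_le (fun j => by positivity) _ hsum
    intro j
    by_cases hj : j = N <;> simp [hc, hj] <;> positivity
  set T := (∑' j, |c j| * ρ ^ j) / ρ ^ (N + 1) with hT
  have hT0 : 0 ≤ T := by
    apply div_nonneg _ (by positivity)
    exact tsum_nonneg fun j => by positivity
  set ε := min ρ (min (|b N| / (2 * (T + 1))) (1 / (T + 1))) with hε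
  have hεpos : 0 < ε := by
    have : 0 < |b N| := abs_pos.mpr hN
    apply lt_min hρ (lt_min (by positivity) (by positivity))
  refine ⟨ε, hεpos, fun s hs hsε => ?_⟩
  have hsρ : s ≤ ρ := le_trans hsε (min_le_left _ _)
  -- tail sum
  have hrep' := hrep s (by rw [abs_of_pos hs]; exact hsρ)
  have hsingle : HasSum (fun j => if j = N then b N * s ^ N else 0) (b N * s ^ N) :=
    hasSum_ite_eq N _
  have htail : HasSum (fun j => c j * s ^ j) (ψ s - b N * s ^ N) := by
    have h := hrep'.sub hsingle
    rw [show (fun j => c j * s ^ j) = fun j => b j * s ^ j - (if j = N then b N * s ^ N else 0) from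
      funext fun j => by by_cases hj : j = N <;> simp [hc, hj]]
    exact h
  have hcvan : ∀ j < N + 1, c j = 0 := by
    intro j hj
    rcases Nat.lt_succ_iff_lt_or_eq.mp hj with h | h
    · simp [hc, hvan j h, if_neg (Nat.ne_of_lt h)]
    · simp [hc, h]
  have htb := tail_bound hρ hcsum hcvan (le_of_lt hs) hsρ htail
  have htb' : |ψ s - b N * s ^ N| ≤ T * s * s ^ N := by
    refine le_trans htb (le_of_eq ?_)
    rw [hT, pow_succ]; ring
  have hsmall1 : T * s ≤ |b N| / 2 := by
    have h1 : s ≤ |b N| / (2 * (T + 1)) := le_trans hsε (le_trans (min_le_right _ _) (min_le_left _ _))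
    calc T * s ≤ (T + 1) * s := by nlinarith
    _ ≤ (T + 1) * (|b N| / (2 * (T + 1))) := by
        apply mul_le_mul_of_nonneg_left h1 (by linarith)
    _ = |b N| / 2 := by field_simp
  have hsmall2 : T * s ≤ 1 := by
    have h1 : s ≤ 1 / (T + 1) := le_trans hsε (le_trans (min_le_right _ _) (min_le_right _ _))
    calc T * s ≤ (T + 1) * s := by nlinarith
    _ ≤ (T + 1) * (1 / (T + 1)) := mul_le_mul_of_nonneg_left h1 (by linarith)
    _ = 1 := by field_simp
  have hpow : (0:ℝ) < s ^ N := by positivity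
  constructor
  · have h1 : |b N * s ^ N| - |ψ s - b N * s ^ N| ≤ |ψ s| := by
      have := abs_sub_abs_le_abs_sub (b N * s ^ N) (b N * s ^ N - ψ s)
      rw [abs_sub_comm] at this
      simpa using this
    have h2 : |b N * s ^ N| = |b N| * s ^ N := by
      rw [abs_mul, abs_pow, abs_of_pos hs]
    nlinarith [htb']
  · have h1 : |ψ s| ≤ |b N * s ^ N| + |ψ s - b N * s ^ N| := by
      have := abs_add_le (b N * s ^ N) (ψ s - b N * s ^ N)
      simpa using this
    have h2 : |b N * s ^ N| = |b N| * s ^ N := by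
      rw [abs_mul, abs_pow, abs_of_pos hs]
    nlinarith [htb']

lemma pow_sub_pow_le_aux {s t : ℝ} (hs : 0 ≤ s) (hst : s ≤ t) {M j : ℕ}
    (hM : 0 < M) (hMj : M ≤ j) :
    t ^ j - s ^ j ≤ (j : ℝ) * t ^ (j - M) * (t ^ M - s ^ M) := by
  have ht : 0 ≤ t := le_trans hs hst
  have hG : ∀ n : ℕ, t ^ n - s ^ n = (∑ i ∈ Finset.range n, t ^ i * s ^ (n - 1 - i)) * (t - s) :=
    fun n => (geom_sum₂_mul t s n).symm
  have h1 : ∑ i ∈ Finset.range j, t ^ i * s ^ (j - 1 - i) ≤ (j : ℝ) * t ^ (j - 1) := by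
    calc ∑ i ∈ Finset.range j, t ^ i * s ^ (j - 1 - i)
        ≤ ∑ i ∈ Finset.range j, t ^ (j - 1) := by
          apply Finset.sum_le_sum
          intro i hi
          simp only [Finset.mem_range] at hi
          calc t ^ i * s ^ (j - 1 - i) ≤ t ^ i * t ^ (j - 1 - i) := by
                apply mul_le_mul_of_nonneg_left (pow_le_pow_left₀ hs hst _) (by positivity)
          _ = t ^ (j - 1) := by rw [← pow_add]; congr 1; omega
    _ = (j : ℝ) * t ^ (j - 1) := by
          rw [Finset.sum_const, Finset.card_range, nsmul_eq_mul]
  have h2 : t ^ (M - 1) ≤ ∑ i ∈ Finset.range M, t ^ i * s ^ (M - 1 - i) := by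
    have hmem : M - 1 ∈ Finset.range M := by simp; omega
    have := Finset.single_le_sum (f := fun i => t ^ i * s ^ (M - 1 - i))
      (fun i _ => by positivity) hmem
    simpa using this
  have hts : 0 ≤ t - s := by linarith
  have hkey : t ^ (j - 1) = t ^ (j - M) * t ^ (M - 1) := by rw [← pow_add]; congr 1; omega
  rw [hG j, hG M]
  calc (∑ i ∈ Finset.range j, t ^ i * s ^ (j - 1 - i)) * (t - s)
      ≤ ((j : ℝ) * t ^ (j - 1)) * (t - s) := mul_le_mul_of_nonneg_right h1 hts
  _ = (j : ℝ) * t ^ (j - M) * (t ^ (M - 1) * (t - s)) := by rw [hkey]; ring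
  _ ≤ (j : ℝ) * t ^ (j - M) * ((∑ i ∈ Finset.range M, t ^ i * s ^ (M - 1 - i)) * (t - s)) := by
      apply mul_le_mul_of_nonneg_left (mul_le_mul_of_nonneg_right h2 hts) (by positivity)

/-- Lipschitz bound with respect to `y = s^M` for a series with coefficients vanishing below
`M`. -/
lemma lipschitz_graph {b : ℕ → ℝ} {ψ : ℝ → ℝ} (hPS : HasPS b ψ) {M : ℕ} (hM : 0 < M)
    (hvan : ∀ j < M, b j = 0) :
    ∃ ρ > (0:ℝ), ∃ L : ℝ, 0 ≤ L ∧ ∀ s t : ℝ, 0 ≤ s → s ≤ t → t ≤ ρ →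
      |ψ t - ψ s| ≤ L * (t ^ M - s ^ M) := by
  obtain ⟨ρ₀, hρ₀, hρ₀1, hsum, hrep⟩ := hPS.data
  have hK : ∀ j, |b j| * ρ₀ ^ j ≤ ∑' i, |b i| * ρ₀ ^ i :=
    fun j => Summable.le_tsum hsum j (fun i _ => by positivity)
  set K := ∑' i, |b i| * ρ₀ ^ i with hKdef
  have hK0 : 0 ≤ K := tsum_nonneg (fun i => by positivity)
  set ρ := ρ₀ / 2 with hρdef
  have hρ : 0 < ρ := by positivity
  set m : ℕ → ℝ := fun j => (K / ρ ^ M) * ((j:ℝ) * (1/2) ^ j) with hm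
  have hmsum : Summable m := by
    apply Summable.mul_left
    have := summable_pow_mul_geometric_of_norm_lt_one (R := ℝ) 1 (r := 1/2) (by norm_num)
    simpa using this
  have hmaj : ∀ j, ∀ s t : ℝ, 0 ≤ s → s ≤ t → t ≤ ρ →
      |b j * (t ^ j - s ^ j)| ≤ m j * (t ^ M - s ^ M) := by
    intro j s t hs hst htρ
    have ht : 0 ≤ t := le_trans hs hst
    have hyd : 0 ≤ t ^ M - s ^ M := by
      have := pow_le_pow_left₀ hs hst M; linarith
    rcases lt_or_ge j M with hj | hj
    · simp only [hvan j hj, zero_mul, abs_zero]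
      positivity
    · rw [abs_mul]
      have h1 : |t ^ j - s ^ j| ≤ (j:ℝ) * t ^ (j - M) * (t ^ M - s ^ M) := by
        rw [abs_of_nonneg (by have := pow_le_pow_left₀ hs hst j; linarith)]
        exact pow_sub_pow_le_aux hs hst hM hj
      have h2 : |b j| * ((j:ℝ) * t ^ (j - M)) ≤ m j := by
        have hbj : |b j| ≤ K / ρ₀ ^ j := by
          rw [le_div_iff₀ (by positivity)]; exact hK j
        have htj : t ^ (j - M) ≤ ρ ^ (j - M) := pow_le_pow_left₀ ht htρ _
        have hρρ₀ : ρ ^ (j - M) = ρ ^ j / ρ ^ M := by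
          rw [eq_div_iff (by positivity), ← pow_add]; congr 1; omega
        have hρj : ρ ^ j = ρ₀ ^ j * (1/2) ^ j := by
          rw [hρdef, ← mul_pow]; congr 1; ring
        calc |b j| * ((j:ℝ) * t ^ (j - M)) ≤ (K / ρ₀ ^ j) * ((j:ℝ) * ρ ^ (j - M)) := by
              apply mul_le_mul hbj _ (by positivity) (by positivity)
              exact mul_le_mul_of_nonneg_left htj (by positivity)
        _ = m j := by
              rw [hm, hρρ₀, hρj]
              field_simp
      calc |b j| * |t ^ j - s ^ j| ≤ |b j| * ((j:ℝ) * t ^ (j - M) * (t ^ M - s ^ M)) :=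
            mul_le_mul_of_nonneg_left h1 (abs_nonneg _)
      _ = (|b j| * ((j:ℝ) * t ^ (j - M))) * (t ^ M - s ^ M) := by ring
      _ ≤ m j * (t ^ M - s ^ M) := mul_le_mul_of_nonneg_right h2 hyd
  refine ⟨ρ, hρ, ∑' j, m j, tsum_nonneg (fun j => by positivity), fun s t hs hst htρ => ?_⟩
  have hyd : 0 ≤ t ^ M - s ^ M := by
    have := pow_le_pow_left₀ hs hst M; linarith
  have ht : 0 ≤ t := le_trans hs hst
  have hρ₀' : ρ ≤ ρ₀ := by rw [hρdef]; linarith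
  have hrt := hrep t (by rw [abs_of_nonneg ht]; linarith)
  have hrs := hrep s (by rw [abs_of_nonneg hs]; linarith)
  have hdiff : HasSum (fun j => b j * (t ^ j - s ^ j)) (ψ t - ψ s) := by
    have := hrt.sub hrs
    rw [show (fun j => b j * (t ^ j - s ^ j)) = fun j => b j * t ^ j - b j * s ^ j from
      funext fun j => by ring]
    exact this
  have hsum2 : Summable (fun j => |b j * (t ^ j - s ^ j)|) :=
    Summable.of_nonneg_of_le (fun j => abs_nonneg _)
      (fun j => hmaj j s t hs hst htρ) (hmsum.mul_right _)
  calc |ψ t - ψ s| = ‖ψ t - ψ s‖ := rfl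
  _ ≤ ∑' j, ‖b j * (t ^ j - s ^ j)‖ := by
      rw [← hdiff.tsum_eq]; exact norm_tsum_le_tsum_norm hsum2
  _ ≤ ∑' j, m j * (t ^ M - s ^ M) :=
      Summable.tsum_le_tsum (fun j => hmaj j s t hs hst htρ) hsum2 (hmsum.mul_right _)
  _ = (∑' j, m j) * (t ^ M - s ^ M) := tsum_mul_right

lemma hasPS_stretch {a : ℕ → ℝ} {φ : ℝ → ℝ} {k : ℕ} (hk : 0 < k) (h : HasPS a φ) :
    HasPS (stretch k a) (fun s => φ (s ^ k)) := by
  obtain ⟨r, hr, hsum⟩ := h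
  refine ⟨min r 1, by positivity, fun s hs => ?_⟩
  have hsr : |s| < r := lt_of_lt_of_le hs (min_le_left _ _)
  have hs1 : |s| < 1 := lt_of_lt_of_le hs (min_le_right _ _)
  have hsk : |s ^ k| < r := by
    rw [abs_pow]
    calc |s| ^ k ≤ |s| ^ 1 :=
          pow_le_pow_of_le_one (abs_nonneg _) (le_of_lt hs1) hk
    _ = |s| := pow_one _
    _ < r := hsr
  have h0 := hsum (s ^ k) hsk
  have hinj : Function.Injective (fun j => k * j) :=
    fun x y hxy => Nat.eq_of_mul_eq_mul_left hk hxy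
  have hzero : ∀ j ∉ Set.range (fun j => k * j), stretch k a j * s ^ j = 0 := by
    intro j hj
    have hnd : ¬ k ∣ j := by
      rintro ⟨c, rfl⟩
      exact hj ⟨c, rfl⟩
    simp only [stretch, if_neg hnd, zero_mul]
  have hcomp : HasSum ((fun j => stretch k a j * s ^ j) ∘ fun j => k * j) (φ (s ^ k)) := by
    convert h0 using 2 with j
    simp only [Function.comp_apply, stretch]
    rw [if_pos (dvd_mul_right k j), Nat.mul_div_cancel_left j hk, ← pow_mul]
  exact (hinj.hasSum_iff hzero).mp hcomp

lemma stretch_vanish {m k : ℕ} {a : ℕ → ℝ} (hvan : ∀ j < m, a j = 0) :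
    ∀ j < k * m, stretch k a j = 0 := by
  intro j hj
  have hk : 0 < k := by
    rcases Nat.eq_zero_or_pos k with h | h
    · subst h; simp at hj
    · exact h
  simp only [stretch]
  split
  · next hdvd =>
      obtain ⟨c, rfl⟩ := hdvd
      rw [Nat.mul_div_cancel_left c hk]
      exact hvan c (Nat.lt_of_mul_lt_mul_left hj)
  · rfl

lemma hasPS_sub {b₁ b₂ : ℕ → ℝ} {ψ₁ ψ₂ : ℝ → ℝ} (h₁ : HasPS b₁ ψ₁) (h₂ : HasPS b₂ ψ₂) :
    HasPS (fun j => b₁ j - b₂ j) (fun s => ψ₁ s - ψ₂ s) := by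
  obtain ⟨r₁, hr₁, hs₁⟩ := h₁
  obtain ⟨r₂, hr₂, hs₂⟩ := h₂
  refine ⟨min r₁ r₂, lt_min hr₁ hr₂, fun t ht => ?_⟩
  have h := (hs₁ t (lt_of_lt_of_le ht (min_le_left _ _))).sub
    (hs₂ t (lt_of_lt_of_le ht (min_le_right _ _)))
  show HasSum (fun j => (b₁ j - b₂ j) * t ^ j) (ψ₁ t - ψ₂ t)
  rw [show (fun j => (b₁ j - b₂ j) * t ^ j) = fun j => b₁ j * t ^ j - b₂ j * t ^ j from
    funext fun j => by ring]
  exact h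

/-- A convergent power series vanishing on a right neighborhood of `0` has zero
coefficients. -/
lemma coeff_eq_zero_of_vanish {b : ℕ → ℝ} {ψ : ℝ → ℝ} (hPS : HasPS b ψ) {ε : ℝ}
    (hε : 0 < ε) (hvan : ∀ s : ℝ, 0 < s → s ≤ ε → ψ s = 0) : ∀ j, b j = 0 := by
  by_contra hc
  push_neg at hc
  have hne : {j : ℕ | b j ≠ 0}.Nonempty := hc
  set N := sInf {j : ℕ | b j ≠ 0} with hN
  have hNmem : b N ≠ 0 := Nat.sInf_mem hne
  have hNvan : ∀ j < N, b j = 0 := fun j hj => by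
    by_contra h; exact absurd (Nat.sInf_le h) (not_le.mpr hj)
  obtain ⟨ε', hε', hbound⟩ := ord_asymp hPS hNmem hNvan
  set s := min ε ε' with hs
  have hspos : 0 < s := lt_min hε hε'
  have h1 := (hbound s hspos (min_le_right _ _)).1
  rw [hvan s hspos (min_le_left _ _)] at h1
  simp only [abs_zero] at h1
  have : 0 < |b N| / 2 * s ^ N := by
    have : 0 < |b N| := abs_pos.mpr hNmem
    positivity
  linarith

/-- Two-sided power comparison forces equal exponents. -/
lemma pow_exponent_eq {c₁ C₁ c₂ C₂ ε : ℝ} {N N' : ℕ} (hε : 0 < ε)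
    (hc₁ : 0 < c₁) (hc₂ : 0 < c₂)
    (h : ∀ s : ℝ, 0 < s → s ≤ ε →
      c₁ * s ^ N ≤ C₂ * s ^ N' ∧ c₂ * s ^ N' ≤ C₁ * s ^ N) : N = N' := by
  have key : ∀ (a b : ℕ) (c C : ℝ), 0 < c →
      (∀ s : ℝ, 0 < s → s ≤ ε → c * s ^ a ≤ C * s ^ b) → b ≤ a := by
    intro a b c C hc hcomp
    by_contra hab
    push_neg at hab
    have hC : 0 < C := by
      have := hcomp (min ε 1) (lt_min hε one_pos) (min_le_left _ _)
      by_contra hC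
      push_neg at hC
      nlinarith [pow_pos (lt_min hε one_pos) a, pow_pos (lt_min hε one_pos) b,
        mul_nonpos_of_nonpos_of_nonneg hC (le_of_lt (pow_pos (lt_min hε one_pos) b))]
    set s := min (min ε 1) (c / (2 * C)) with hsdef
    have hspos : 0 < s := lt_min (lt_min hε one_pos) (by positivity)
    have hsε : s ≤ ε := le_trans (min_le_left _ _) (min_le_left _ _)
    have hs1 : s ≤ 1 := le_trans (min_le_left _ _) (min_le_right _ _)
    have hsc : s ≤ c / (2 * C) := min_le_right _ _
    have h1 := hcomp s hspos hsε
    have h2 : s ^ b ≤ s * s ^ a := by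
      calc s ^ b ≤ s ^ (a + 1) := pow_le_pow_of_le_one (le_of_lt hspos) hs1 (by omega)
      _ = s * s ^ a := by ring
    have hpa : 0 < s ^ a := pow_pos hspos a
    have : c * s ^ a ≤ C * (s * s ^ a) := le_trans h1 (by nlinarith)
    have hcs : c ≤ C * s := by
      have := mul_le_mul_of_nonneg_right this (le_of_lt (inv_pos.mpr hpa))
      field_simp at this
      nlinarith [this]
    have : C * s ≤ C * (c / (2 * C)) := mul_le_mul_of_nonneg_left hsc (le_of_lt hC)
    have hCc : C * (c / (2 * C)) = c / 2 := by field_simp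
    linarith
  have h1 : N' ≤ N := key N N' c₁ C₂ hc₁ (fun s hs hsε => (h s hs hsε).1)
  have h2 : N ≤ N' := key N' N c₂ C₁ hc₂ (fun s hs hsε => (h s hs hsε).2)
  omega

/-- Linear bounds and continuity for an analytic germ with positive derivative. -/
lemma sigma_est {σ : ℝ → ℝ} (hσa : AnalyticAt ℝ σ 0) (hσ0 : σ 0 = 0)
    (hσd : 0 < deriv σ 0) :
    ∃ δ > (0:ℝ), ContinuousOn σ (Set.Icc 0 δ) ∧
      ∀ t : ℝ, 0 ≤ t → t ≤ δ → (deriv σ 0 / 2) * t ≤ σ t ∧ σ t ≤ (2 * deriv σ 0) * t := by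
  set d := deriv σ 0 with hd
  have hder : HasDerivAt σ d 0 := hσa.differentiableAt.hasDerivAt
  rw [hasDerivAt_iff_isLittleO] at hder
  have hlittle := hder.def (show (0:ℝ) < d/2 by linarith)
  rw [Metric.eventually_nhds_iff] at hlittle
  obtain ⟨ε₁, hε₁, hb₁⟩ := hlittle
  have hcont : ∀ᶠ y in 𝓝 (0:ℝ), AnalyticAt ℝ σ y := hσa.eventually_analyticAt
  rw [Metric.eventually_nhds_iff] at hcont
  obtain ⟨ε₂, hε₂, hb₂⟩ := hcont
  refine ⟨min (ε₁/2) (ε₂/2), by positivity, ?_, ?_⟩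
  · intro t ht
    apply (hb₂ (y := t) ?_).continuousAt.continuousWithinAt
    rw [Real.dist_eq, sub_zero]
    rw [Set.mem_Icc] at ht
    rw [abs_of_nonneg ht.1]
    calc t ≤ min (ε₁/2) (ε₂/2) := ht.2
    _ ≤ ε₂/2 := min_le_right _ _
    _ < ε₂ := by linarith
  · intro t ht0 htδ
    rcases eq_or_lt_of_le ht0 with rfl | htpos
    · simp [hσ0]
    have hdist : dist t 0 < ε₁ := by
      rw [Real.dist_eq, sub_zero, abs_of_pos htpos]
      calc t ≤ min (ε₁/2) (ε₂/2) := htδ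
      _ ≤ ε₁/2 := min_le_left _ _
      _ < ε₁ := by linarith
    have := hb₁ hdist
    simp only [hσ0, sub_zero, smul_eq_mul, Real.norm_eq_abs] at this
    rw [abs_of_pos htpos] at this
    have habs := abs_le.mp this
    constructor <;> nlinarith [habs.1, habs.2]

/-- Local bi-Lipschitz bounds for an analytic map with invertible derivative. -/
lemma psi_bilip {Ψ : ℝ × ℝ → ℝ × ℝ} (hΨa : AnalyticAt ℝ Ψ 0)
    (hΨdet : (fderiv ℝ Ψ 0).det ≠ 0) :
    ∃ εΨ > (0:ℝ), ∃ KΨ : ℝ, 1 ≤ KΨ ∧ ∀ p q : ℝ × ℝ, ‖p‖ ≤ εΨ → ‖q‖ ≤ εΨ →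
      KΨ⁻¹ * ‖p - q‖ ≤ ‖Ψ p - Ψ q‖ ∧ ‖Ψ p - Ψ q‖ ≤ KΨ * ‖p - q‖ := by
  set f' := fderiv ℝ Ψ 0 with hf'
  set e := f'.toContinuousLinearEquivOfDetNeZero hΨdet with he
  have hanti : AntilipschitzWith _ e := e.antilipschitz
  set K : ℝ := (‖(e.symm : (ℝ×ℝ) →L[ℝ] (ℝ×ℝ))‖₊ : ℝ) with hKdef
  have hKanti : ∀ v : ℝ × ℝ, ‖v‖ ≤ K * ‖f' v‖ := by
    intro v
    have := hanti.le_mul_dist v 0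
    simpa [dist_eq_norm, he, hKdef] using this
  have hKpos : 0 < K := by
    have h1 := hKanti (1, 0)
    have : ‖((1:ℝ), (0:ℝ))‖ = 1 := by simp [Prod.norm_def]
    rw [this] at h1
    nlinarith [norm_nonneg (f' (1, 0)), h1, mul_nonneg (show (0:ℝ) ≤ K from NNReal.coe_nonneg _) (norm_nonneg (f' (1,0)))]
  have hstrict : HasStrictFDerivAt Ψ f' 0 := hΨa.hasStrictFDerivAt
  rw [hasStrictFDerivAt_iff_isLittleO] at hstrict
  have hlittle := hstrict.def (show (0:ℝ) < (2*K)⁻¹ by positivity)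
  rw [Metric.eventually_nhds_iff] at hlittle
  obtain ⟨ε, hε, hb⟩ := hlittle
  refine ⟨ε/2, by positivity, max (‖f'‖ + (2*K)⁻¹ + 1) (2*K),
    le_trans (by nlinarith [norm_nonneg f', inv_pos.mpr (show (0:ℝ) < 2*K by linarith)]) (le_max_left _ _), ?_⟩
  intro p q hp hq
  have hdist : dist ((p,q) : (ℝ×ℝ)×(ℝ×ℝ)) (0,0) < ε := by
    rw [Prod.dist_eq]
    simp only [dist_zero_right]
    apply max_lt <;> [skip; skip] <;> linarith [hp, hq]
  have hkey := hb (y := (p,q)) (by simpa using hdist)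
  have hkey' : ‖Ψ p - Ψ q - f' (p - q)‖ ≤ (2*K)⁻¹ * ‖p - q‖ := by
    simpa using hkey
  constructor
  · have h1 : ‖f' (p - q)‖ ≤ ‖Ψ p - Ψ q‖ + (2*K)⁻¹ * ‖p - q‖ := by
      have h0 : f' (p - q) = (Ψ p - Ψ q) - (Ψ p - Ψ q - f' (p - q)) := by abel
      calc ‖f' (p - q)‖ = ‖(Ψ p - Ψ q) - (Ψ p - Ψ q - f' (p - q))‖ := by rw [← h0]
      _ ≤ ‖Ψ p - Ψ q‖ + ‖Ψ p - Ψ q - f' (p - q)‖ := norm_sub_le _ _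
      _ ≤ ‖Ψ p - Ψ q‖ + (2*K)⁻¹ * ‖p - q‖ := by linarith [hkey']
    have h2 : K⁻¹ * ‖p - q‖ ≤ ‖f' (p - q)‖ := by
      have := hKanti (p - q)
      rw [inv_mul_le_iff₀ hKpos]
      linarith
    have hKK : K⁻¹ * ‖p - q‖ = (2*K)⁻¹ * ‖p - q‖ + (2*K)⁻¹ * ‖p - q‖ := by
      field_simp; ring
    have h4 : (2*K)⁻¹ * ‖p - q‖ ≤ ‖Ψ p - Ψ q‖ := by linarith
    have h3 : (max (‖f'‖ + (2*K)⁻¹ + 1) (2*K))⁻¹ * ‖p - q‖ ≤ (2*K)⁻¹ * ‖p - q‖ := by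
      apply mul_le_mul_of_nonneg_right _ (norm_nonneg _)
      apply inv_anti₀ (by positivity) (le_max_right _ _)
    linarith
  · have hstep : ‖Ψ p - Ψ q‖ ≤ ‖f' (p - q)‖ + (2*K)⁻¹ * ‖p - q‖ := by
        have := norm_add_le (Ψ p - Ψ q - f' (p-q)) (f' (p-q))
        simp only [sub_add_cancel] at this
        linarith [hkey']
    calc ‖Ψ p - Ψ q‖ ≤ ‖f' (p - q)‖ + (2*K)⁻¹ * ‖p - q‖ := hstep
    _ ≤ ‖f'‖ * ‖p - q‖ + (2*K)⁻¹ * ‖p - q‖ := by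
        have h1 := f'.le_opNorm (p - q)
        linarith
    _ ≤ (‖f'‖ + (2*K)⁻¹ + 1) * ‖p - q‖ := by
        nlinarith [norm_nonneg (p - q)]
    _ ≤ max (‖f'‖ + (2*K)⁻¹ + 1) (2*K) * ‖p - q‖ :=
        mul_le_mul_of_nonneg_right (le_max_left _ _) (norm_nonneg _)

lemma HasPS.linear_bound {b : ℕ → ℝ} {ψ : ℝ → ℝ} (h : HasPS b ψ) {M : ℕ}
    (hvan : ∀ j < M, b j = 0) :
    ∃ ρ > (0:ℝ), ∃ T : ℝ, 0 ≤ T ∧ ∀ s : ℝ, 0 ≤ s → s ≤ ρ → |ψ s| ≤ T * s ^ M := by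
  obtain ⟨ρ, hρ, hρ1, hsum, hrep⟩ := h.data
  refine ⟨ρ, hρ, (∑' j, |b j| * ρ ^ j) / ρ ^ M,
    div_nonneg (tsum_nonneg fun j => by positivity) (by positivity), fun s hs hsρ => ?_⟩
  exact tail_bound hρ hsum hvan hs hsρ (hrep s (by rwa [abs_of_nonneg hs]))

lemma exists_root {v : ℝ} (hv : 0 ≤ v) {k : ℕ} (hk : 0 < k) :
    ∃ u : ℝ, 0 ≤ u ∧ u ^ k = v := by
  refine ⟨v ^ ((k:ℝ)⁻¹), Real.rpow_nonneg hv _, ?_⟩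
  rw [← Real.rpow_natCast (v ^ ((k:ℝ)⁻¹)) k, ← Real.rpow_mul hv,
    inv_mul_cancel₀ (by exact_mod_cast hk.ne'), Real.rpow_one]

lemma nhdsWithin_ge_extract {P : ℝ → Prop} (h : ∀ᶠ t in 𝓝[≥] (0:ℝ), P t) :
    ∃ δ > (0:ℝ), ∀ t : ℝ, 0 ≤ t → t < δ → P t := by
  rw [eventually_nhdsWithin_iff, Metric.eventually_nhds_iff] at h
  obtain ⟨ε, hε, hb⟩ := h
  refine ⟨ε, hε, fun t ht htδ => ?_⟩
  exact hb (by rw [Real.dist_eq, sub_zero, abs_of_nonneg ht]; exact htδ) ht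

/-- **Well-definedness of the contact order.**  Let `γ₁, γ₂` be tangent reduced real analytic
demi-branches at `0 ∈ ℝ²` presented in common coordinates as `γᵢ(t) = (φᵢ(t), t^{mᵢ})`, and let
`γ'ᵢ(t) = (φ'ᵢ(t), t^{mᵢ})` be presentations of the same demi-branches in another analytic
coordinate system, i.e. `γ'ᵢ = Ψ ∘ γᵢ ∘ σᵢ` with `Ψ` an analytic diffeomorphism germ of
`(ℝ²,0)` and `σᵢ` orientation-preserving analytic diffeomorphism germs of `(ℝ,0)`.
Then `O(γ'₁, γ'₂) = O(γ₁, γ₂)`. -/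
theorem contact_order_well_defined
    (m₁ m₂ : ℕ) (a₁ a₂ a₁' a₂' : ℕ → ℝ) (φ₁ φ₂ φ₁' φ₂' : ℝ → ℝ)
    (ha₁ : IsPres m₁ a₁) (ha₂ : IsPres m₂ a₂)
    (ha₁' : IsPres m₁ a₁') (ha₂' : IsPres m₂ a₂')
    (hφ₁ : HasPS a₁ φ₁) (hφ₂ : HasPS a₂ φ₂)
    (hφ₁' : HasPS a₁' φ₁') (hφ₂' : HasPS a₂' φ₂')
    (htan : Tangent (fun t => (φ₁ t, t ^ m₁)) (fun t => (φ₂ t, t ^ m₂)))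
    (Ψ : ℝ × ℝ → ℝ × ℝ) (σ₁ σ₂ : ℝ → ℝ)
    (hΨa : AnalyticAt ℝ Ψ 0) (hΨ0 : Ψ 0 = 0)
    (hΨdet : (fderiv ℝ Ψ 0).det ≠ 0)
    (hσ₁a : AnalyticAt ℝ σ₁ 0) (hσ₁0 : σ₁ 0 = 0) (hσ₁d : 0 < deriv σ₁ 0)
    (hσ₂a : AnalyticAt ℝ σ₂ 0) (hσ₂0 : σ₂ 0 = 0) (hσ₂d : 0 < deriv σ₂ 0)
    (heq₁ : ∀ᶠ t in 𝓝[≥] (0 : ℝ), (φ₁' t, t ^ m₁) = Ψ (φ₁ (σ₁ t), (σ₁ t) ^ m₁))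
    (heq₂ : ∀ᶠ t in 𝓝[≥] (0 : ℝ), (φ₂' t, t ^ m₂) = Ψ (φ₂ (σ₂ t), (σ₂ t) ^ m₂)) :
    contactOrd m₁ m₂ a₁' a₂' = contactOrd m₁ m₂ a₁ a₂ := by
  classical
  obtain ⟨hm₁, hv₁, -⟩ := ha₁
  obtain ⟨hm₂, hv₂, -⟩ := ha₂
  obtain ⟨-, hv₁', -⟩ := ha₁'
  obtain ⟨-, hv₂', -⟩ := ha₂'
  set M := Nat.lcm m₁ m₂ with hM
  set k₁ := M / m₁ with hk₁
  set k₂ := M / m₂ with hk₂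
  have hMpos : 0 < M := Nat.pos_of_ne_zero (Nat.lcm_ne_zero hm₁.ne' hm₂.ne')
  have hk₁m : k₁ * m₁ = M := Nat.div_mul_cancel (Nat.dvd_lcm_left _ _)
  have hk₂m : k₂ * m₂ = M := Nat.div_mul_cancel (Nat.dvd_lcm_right _ _)
  have hk₁pos : 0 < k₁ := by
    rcases Nat.eq_zero_or_pos k₁ with h | h
    · rw [h, zero_mul] at hk₁m; omega
    · exact h
  have hk₂pos : 0 < k₂ := by
    rcases Nat.eq_zero_or_pos k₂ with h | h
    · rw [h, zero_mul] at hk₂m; omega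
    · exact h
  set A₁ : ℝ → ℝ := fun s => φ₁ (s ^ k₁) with hA₁def
  set A₂ : ℝ → ℝ := fun s => φ₂ (s ^ k₂) with hA₂def
  set A₁' : ℝ → ℝ := fun s => φ₁' (s ^ k₁) with hA₁'def
  set A₂' : ℝ → ℝ := fun s => φ₂' (s ^ k₂) with hA₂'def
  have hA₁ : HasPS (stretch k₁ a₁) A₁ := hasPS_stretch hk₁pos hφ₁
  have hA₂ : HasPS (stretch k₂ a₂) A₂ := hasPS_stretch hk₂pos hφ₂
  have hA₁' : HasPS (stretch k₁ a₁') A₁' := hasPS_stretch hk₁pos hφ₁'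
  have hA₂' : HasPS (stretch k₂ a₂') A₂' := hasPS_stretch hk₂pos hφ₂'
  set D : ℕ → ℝ := fun j => stretch k₁ a₁ j - stretch k₂ a₂ j with hDdef
  set D' : ℕ → ℝ := fun j => stretch k₁ a₁' j - stretch k₂ a₂' j with hD'def
  set ΔA : ℝ → ℝ := fun s => A₁ s - A₂ s with hΔAdef
  set ΔA' : ℝ → ℝ := fun s => A₁' s - A₂' s with hΔA'def
  have hΔA : HasPS D ΔA := hasPS_sub hA₁ hA₂
  have hΔA' : HasPS D' ΔA' := hasPS_sub hA₁' hA₂'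
  have hb₂van : ∀ j < M, stretch k₂ a₂ j = 0 := by
    have := stretch_vanish (k := k₂) hv₂; rwa [hk₂m] at this
  have hb₁van : ∀ j < M, stretch k₁ a₁ j = 0 := by
    have := stretch_vanish (k := k₁) hv₁; rwa [hk₁m] at this
  have hb₂'van : ∀ j < M, stretch k₂ a₂' j = 0 := by
    have := stretch_vanish (k := k₂) hv₂'; rwa [hk₂m] at this
  have hb₁'van : ∀ j < M, stretch k₁ a₁' j = 0 := by
    have := stretch_vanish (k := k₁) hv₁'; rwa [hk₁m] at this
  -- the key two-sided transfer estimate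
  have main : ∃ ε > (0:ℝ), ∃ Bm ≥ (1:ℝ), ∃ β > (0:ℝ), ∃ C ≥ (1:ℝ),
      ∀ s : ℝ, 0 < s → s ≤ ε → ∃ u : ℝ,
        β * s ≤ u ∧ u ≤ Bm * s ∧
        C⁻¹ * |ΔA u| ≤ |ΔA' s| ∧ |ΔA' s| ≤ C * |ΔA u| := by
    set d₁ := deriv σ₁ 0 with hd₁
    set d₂ := deriv σ₂ 0 with hd₂
    obtain ⟨δ₁, hδ₁0, hσ₁c, hσ₁b⟩ := sigma_est hσ₁a hσ₁0 hσ₁d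
    obtain ⟨δ₂, hδ₂0, hσ₂c, hσ₂b⟩ := sigma_est hσ₂a hσ₂0 hσ₂d
    obtain ⟨δe₁, hδe₁0, heq₁'⟩ := nhdsWithin_ge_extract heq₁
    obtain ⟨δe₂, hδe₂0, heq₂'⟩ := nhdsWithin_ge_extract heq₂
    obtain ⟨εΨ, hεΨ0, KΨ, hKΨ1, hΨb⟩ := psi_bilip hΨa hΨdet
    obtain ⟨ρ₂, hρ₂0, L₂, hL₂0, hL₂⟩ := lipschitz_graph hA₂ hMpos hb₂van
    obtain ⟨ρ₂', hρ₂'0, L₂', hL₂'0, hL₂'⟩ := lipschitz_graph hA₂' hMpos hb₂'van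
    obtain ⟨ρT₁, hρT₁0, T₁, hT₁0, hT₁⟩ := hA₁.linear_bound hb₁van
    obtain ⟨ρT₂, hρT₂0, T₂, hT₂0, hT₂⟩ := hA₂.linear_bound hb₂van
    have hKΨ0 : (0:ℝ) < KΨ := lt_of_lt_of_le one_pos hKΨ1
    set B₁ := max (2*d₁) 1 with hB₁def
    set β₁ := min (d₁/2) 1 with hβ₁def
    set B₂ := max (2*d₂) 1 with hB₂def
    set Bm := max B₁ B₂ with hBmdef
    set Tm := max T₁ T₂ with hTmdef
    have hB₁1 : (1:ℝ) ≤ B₁ := le_max_right _ _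
    have hB₂1 : (1:ℝ) ≤ B₂ := le_max_right _ _
    have hBm1 : (1:ℝ) ≤ Bm := le_trans hB₁1 (le_max_left _ _)
    have hBm0 : (0:ℝ) < Bm := lt_of_lt_of_le one_pos hBm1
    have hβ₁0 : (0:ℝ) < β₁ := lt_min (by linarith) one_pos
    have hTm0 : (0:ℝ) ≤ Tm := le_trans hT₁0 (le_max_left _ _)
    set δ₀ := min (min δ₂ 1) (min ρ₂' (δe₂/2)) with hδ₀def
    have hδ₀0 : 0 < δ₀ := lt_min (lt_min hδ₂0 one_pos) (lt_min hρ₂'0 (by linarith))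
    have hδ₀1 : δ₀ ≤ 1 := le_trans (min_le_left _ _) (min_le_right _ _)
    have hδ₀δ₂ : δ₀ ≤ δ₂ := le_trans (min_le_left _ _) (min_le_left _ _)
    have hδ₀ρ₂' : δ₀ ≤ ρ₂' := le_trans (min_le_right _ _) (min_le_left _ _)
    have hδ₀δe₂ : δ₀ ≤ δe₂/2 := le_trans (min_le_right _ _) (min_le_right _ _)
    set R := (d₂/2)^k₁ * δ₀^(k₁*k₂) / (2*d₁)^k₂ with hRdef
    have hR0 : 0 < R := by
      apply div_pos (mul_pos (pow_pos (by linarith) _) (pow_pos hδ₀0 _)) (pow_pos (by linarith) _)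
    have hεex : ∃ ε : ℝ, 0 < ε ∧ ε ≤ δ₁ ∧ ε ≤ δe₁/2 ∧ ε ≤ δ₂ ∧ ε ≤ δe₂/2 ∧ ε ≤ δ₀ ∧
        ε ≤ ρ₂/Bm ∧ ε ≤ ρT₁/Bm ∧ ε ≤ ρT₂/Bm ∧ ε ≤ 1/Bm ∧
        ε ≤ εΨ/((Tm+1)*Bm) ∧ ε ≤ 1 ∧ ε ≤ R := by
      set ε := min δ₁ (min (δe₁/2) (min δ₂ (min (δe₂/2) (min δ₀ (min (ρ₂/Bm)
        (min (ρT₁/Bm) (min (ρT₂/Bm) (min (1/Bm) (min (εΨ/((Tm+1)*Bm)) (min 1 R)))))))))) with hεdef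
      have hε0 : 0 < ε := by
        refine lt_min hδ₁0 (lt_min (by linarith) (lt_min hδ₂0 (lt_min (by linarith)
          (lt_min hδ₀0 (lt_min (by positivity) (lt_min (by positivity) (lt_min (by positivity)
          (lt_min (by positivity) (lt_min (by positivity) (lt_min one_pos hR0))))))))))
      have r1 : ε ≤ δ₁ := min_le_left _ _
      have q1 : ε ≤ min (δe₁/2) _ := min_le_right _ _
      have r2 : ε ≤ δe₁/2 := le_trans q1 (min_le_left _ _)
      have q2 := le_trans q1 (min_le_right _ _)
      have r3 : ε ≤ δ₂ := le_trans q2 (min_le_left _ _)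
      have q3 := le_trans q2 (min_le_right _ _)
      have r4 : ε ≤ δe₂/2 := le_trans q3 (min_le_left _ _)
      have q4 := le_trans q3 (min_le_right _ _)
      have r5 : ε ≤ δ₀ := le_trans q4 (min_le_left _ _)
      have q5 := le_trans q4 (min_le_right _ _)
      have r6 : ε ≤ ρ₂/Bm := le_trans q5 (min_le_left _ _)
      have q6 := le_trans q5 (min_le_right _ _)
      have r7 : ε ≤ ρT₁/Bm := le_trans q6 (min_le_left _ _)
      have q7 := le_trans q6 (min_le_right _ _)
      have r8 : ε ≤ ρT₂/Bm := le_trans q7 (min_le_left _ _)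
      have q8 := le_trans q7 (min_le_right _ _)
      have r9 : ε ≤ 1/Bm := le_trans q8 (min_le_left _ _)
      have q9 := le_trans q8 (min_le_right _ _)
      have r10 : ε ≤ εΨ/((Tm+1)*Bm) := le_trans q9 (min_le_left _ _)
      have q10 := le_trans q9 (min_le_right _ _)
      have r11 : ε ≤ 1 := le_trans q10 (min_le_left _ _)
      have r12 : ε ≤ R := le_trans q10 (min_le_right _ _)
      exact ⟨ε, hε0, r1, r2, r3, r4, r5, r6, r7, r8, r9, r10, r11, r12⟩
    obtain ⟨ε, hε0, r1, r2, r3, r4, r5, r6, r7, r8, r9, r10, r11, r12⟩ := hεex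
    set C := max (KΨ * (1 + L₂)) ((1 + L₂') * KΨ) with hCdef
    have hC1 : (1:ℝ) ≤ C := by
      have h1 : (1:ℝ) ≤ KΨ * (1 + L₂) := by
        calc (1:ℝ) = 1 * 1 := by ring
        _ ≤ KΨ * (1 + L₂) :=
            mul_le_mul hKΨ1 (by linarith only [hL₂0]) one_pos.le (by linarith only [hKΨ1])
      exact le_trans h1 (le_max_left _ _)
    have hC0 : (0:ℝ) < C := lt_of_lt_of_le one_pos hC1
    refine ⟨ε, hε0, Bm, hBm1, β₁, hβ₁0, C, hC1, ?_⟩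
    intro s hs hsε
    have hs1 : s ≤ 1 := le_trans hsε r11
    -- parameters on branch 1
    have ht₁pos : 0 < s ^ k₁ := pow_pos hs _
    have ht₁le : s ^ k₁ ≤ s := by
      calc s ^ k₁ ≤ s ^ 1 := pow_le_pow_of_le_one hs.le hs1 hk₁pos
      _ = s := pow_one s
    have hσ₁bt := hσ₁b (s ^ k₁) ht₁pos.le (le_trans ht₁le (le_trans hsε r1))
    have hv₁pos : 0 < σ₁ (s ^ k₁) := lt_of_lt_of_le (by positivity) hσ₁bt.1
    obtain ⟨u, hu0, huk⟩ := exists_root hv₁pos.le hk₁pos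
    have hβu : β₁ * s ≤ u := by
      apply le_of_pow_le_pow_left₀ hk₁pos.ne' hu0
      rw [mul_pow, huk]
      have hβ1 : β₁ ^ k₁ ≤ d₁/2 := by
        calc β₁ ^ k₁ ≤ β₁ ^ 1 := pow_le_pow_of_le_one hβ₁0.le (min_le_right _ _) hk₁pos
        _ = β₁ := pow_one _
        _ ≤ d₁/2 := min_le_left _ _
      calc β₁ ^ k₁ * s ^ k₁ ≤ (d₁/2) * s ^ k₁ :=
            mul_le_mul_of_nonneg_right hβ1 (by positivity)
      _ ≤ σ₁ (s ^ k₁) := hσ₁bt.1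
    have huB : u ≤ B₁ * s := by
      apply le_of_pow_le_pow_left₀ hk₁pos.ne' (by positivity)
      rw [mul_pow, huk]
      have hB1 : 2*d₁ ≤ B₁ ^ k₁ := by
        calc 2*d₁ ≤ B₁ := le_max_left _ _
        _ = B₁ ^ 1 := (pow_one _).symm
        _ ≤ B₁ ^ k₁ := pow_le_pow_right₀ hB₁1 hk₁pos
      calc σ₁ (s ^ k₁) ≤ (2*d₁) * s ^ k₁ := hσ₁bt.2
      _ ≤ B₁ ^ k₁ * s ^ k₁ := mul_le_mul_of_nonneg_right hB1 (by positivity)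
    have huBm : u ≤ Bm * s :=
      le_trans huB (mul_le_mul_of_nonneg_right (le_max_left _ _) hs.le)
    -- parameters on branch 2
    have ht₂pos : 0 < s ^ k₂ := pow_pos hs _
    have ht₂le : s ^ k₂ ≤ s := by
      calc s ^ k₂ ≤ s ^ 1 := pow_le_pow_of_le_one hs.le hs1 hk₂pos
      _ = s := pow_one s
    have hσ₂bt := hσ₂b (s ^ k₂) ht₂pos.le (le_trans ht₂le (le_trans hsε r3))
    have hv₂pos : 0 < σ₂ (s ^ k₂) := lt_of_lt_of_le (by positivity) hσ₂bt.1
    obtain ⟨u₂, hu₂0, hu₂k⟩ := exists_root hv₂pos.le hk₂pos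
    have hu₂B : u₂ ≤ B₂ * s := by
      apply le_of_pow_le_pow_left₀ hk₂pos.ne' (by positivity)
      rw [mul_pow, hu₂k]
      have hB2 : 2*d₂ ≤ B₂ ^ k₂ := by
        calc 2*d₂ ≤ B₂ := le_max_left _ _
        _ = B₂ ^ 1 := (pow_one _).symm
        _ ≤ B₂ ^ k₂ := pow_le_pow_right₀ hB₂1 hk₂pos
      calc σ₂ (s ^ k₂) ≤ (2*d₂) * s ^ k₂ := hσ₂bt.2
      _ ≤ B₂ ^ k₂ * s ^ k₂ := mul_le_mul_of_nonneg_right hB2 (by positivity)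
    have hu₂Bm : u₂ ≤ Bm * s :=
      le_trans hu₂B (mul_le_mul_of_nonneg_right (le_max_right _ _) hs.le)
    -- choose w by the intermediate value theorem
    have hδ₀k₂δ₂ : δ₀ ^ k₂ ≤ δ₂ := by
      calc δ₀ ^ k₂ ≤ δ₀ ^ 1 := pow_le_pow_of_le_one hδ₀0.le hδ₀1 hk₂pos
      _ = δ₀ := pow_one _
      _ ≤ δ₂ := hδ₀δ₂
    have hgc : ContinuousOn (fun w : ℝ => (σ₂ (w ^ k₂)) ^ k₁) (Set.Icc 0 δ₀) := by
      apply ContinuousOn.pow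
      apply hσ₂c.comp ((continuous_pow k₂).continuousOn)
      intro w hw
      simp only [Set.mem_Icc] at hw ⊢
      refine ⟨pow_nonneg hw.1 _, ?_⟩
      calc w ^ k₂ ≤ δ₀ ^ k₂ := pow_le_pow_left₀ hw.1 hw.2 _
      _ ≤ δ₂ := hδ₀k₂δ₂
    have htarget : σ₁ (s ^ k₁) ^ k₂ ∈
        Set.Icc ((σ₂ ((0:ℝ) ^ k₂)) ^ k₁) ((σ₂ (δ₀ ^ k₂)) ^ k₁) := by
      rw [zero_pow hk₂pos.ne', hσ₂0, zero_pow hk₁pos.ne']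
      constructor
      · positivity
      · have hstep : σ₁ (s ^ k₁) ^ k₂ ≤ (2*d₁) ^ k₂ * s ^ (k₁ * k₂) := by
          calc σ₁ (s ^ k₁) ^ k₂ ≤ ((2*d₁) * s ^ k₁) ^ k₂ :=
                pow_le_pow_left₀ hv₁pos.le hσ₁bt.2 _
          _ = (2*d₁) ^ k₂ * s ^ (k₁ * k₂) := by rw [mul_pow, ← pow_mul]
        have hsR : s ^ (k₁ * k₂) ≤ R := by
          calc s ^ (k₁ * k₂) ≤ s ^ 1 :=
                pow_le_pow_of_le_one hs.le hs1
                  (Nat.one_le_iff_ne_zero.mpr (Nat.mul_ne_zero hk₁pos.ne' hk₂pos.ne'))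
          _ = s := pow_one _
          _ ≤ R := le_trans hsε r12
        have hRid : (2*d₁) ^ k₂ * R = (d₂/2) ^ k₁ * δ₀ ^ (k₁ * k₂) := by
          rw [hRdef]
          field_simp
        have hfin2 : (d₂/2) ^ k₁ * δ₀ ^ (k₁ * k₂) ≤ (σ₂ (δ₀ ^ k₂)) ^ k₁ := by
          have h1 : (d₂/2) * δ₀ ^ k₂ ≤ σ₂ (δ₀ ^ k₂) :=
            (hσ₂b (δ₀ ^ k₂) (by positivity) hδ₀k₂δ₂).1
          calc (d₂/2) ^ k₁ * δ₀ ^ (k₁ * k₂) = ((d₂/2) * δ₀ ^ k₂) ^ k₁ := by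
                rw [mul_pow, ← pow_mul, mul_comm k₂ k₁]
          _ ≤ (σ₂ (δ₀ ^ k₂)) ^ k₁ := pow_le_pow_left₀ (by positivity) h1 _
        calc σ₁ (s ^ k₁) ^ k₂ ≤ (2*d₁) ^ k₂ * s ^ (k₁ * k₂) := hstep
        _ ≤ (2*d₁) ^ k₂ * R := mul_le_mul_of_nonneg_left hsR (by positivity)
        _ = (d₂/2) ^ k₁ * δ₀ ^ (k₁ * k₂) := hRid
        _ ≤ (σ₂ (δ₀ ^ k₂)) ^ k₁ := hfin2
    obtain ⟨w, hw, hgw⟩ := intermediate_value_Icc hδ₀0.le hgc htarget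
    have hw0 : 0 ≤ w := hw.1
    have hwδ₀ : w ≤ δ₀ := hw.2
    have hwk₂δ₂ : w ^ k₂ ≤ δ₂ := by
      calc w ^ k₂ ≤ δ₀ ^ k₂ := pow_le_pow_left₀ hw0 hwδ₀ _
      _ ≤ δ₂ := hδ₀k₂δ₂
    have hσ₂w0 : 0 ≤ σ₂ (w ^ k₂) :=
      le_trans (by positivity) (hσ₂b _ (by positivity) hwk₂δ₂).1
    have hσ₂wu : σ₂ (w ^ k₂) = u ^ k₂ := by
      have hgw' : (σ₂ (w ^ k₂)) ^ k₁ = σ₁ (s ^ k₁) ^ k₂ := hgw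
      have h1 : (σ₂ (w ^ k₂)) ^ k₁ = (u ^ k₂) ^ k₁ := by
        rw [hgw', ← huk, ← pow_mul, ← pow_mul, mul_comm]
      exact le_antisymm
        (le_of_pow_le_pow_left₀ hk₁pos.ne' (by positivity) h1.le)
        (le_of_pow_le_pow_left₀ hk₁pos.ne' hσ₂w0 h1.ge)
    -- point identities
    have hE₁ : ((A₁' s, s ^ M) : ℝ × ℝ) = Ψ (A₁ u, u ^ M) := by
      have h := heq₁' (s ^ k₁) ht₁pos.le
        (lt_of_le_of_lt (le_trans ht₁le hsε) (lt_of_le_of_lt r2 (by linarith)))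
      have h2 : (s ^ k₁) ^ m₁ = s ^ M := by rw [← pow_mul, hk₁m]
      have h4 : (σ₁ (s ^ k₁)) ^ m₁ = u ^ M := by rw [← huk, ← pow_mul, hk₁m]
      rw [h2, h4, ← huk] at h
      exact h
    have hE₂ : ((A₂' s, s ^ M) : ℝ × ℝ) = Ψ (A₂ u₂, u₂ ^ M) := by
      have h := heq₂' (s ^ k₂) ht₂pos.le
        (lt_of_le_of_lt (le_trans ht₂le hsε) (lt_of_le_of_lt r4 (by linarith)))
      have h2 : (s ^ k₂) ^ m₂ = s ^ M := by rw [← pow_mul, hk₂m]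
      have h4 : (σ₂ (s ^ k₂)) ^ m₂ = u₂ ^ M := by rw [← hu₂k, ← pow_mul, hk₂m]
      rw [h2, h4, ← hu₂k] at h
      exact h
    have hE₃ : ((A₂' w, w ^ M) : ℝ × ℝ) = Ψ (A₂ u, u ^ M) := by
      have hwδe₂ : w ^ k₂ < δe₂ := by
        calc w ^ k₂ ≤ δ₀ ^ k₂ := pow_le_pow_left₀ hw0 hwδ₀ _
        _ ≤ δ₀ ^ 1 := pow_le_pow_of_le_one hδ₀0.le hδ₀1 hk₂pos
        _ = δ₀ := pow_one _
        _ ≤ δe₂/2 := hδ₀δe₂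
        _ < δe₂ := by linarith
      have h := heq₂' (w ^ k₂) (by positivity) hwδe₂
      have h2 : (w ^ k₂) ^ m₂ = w ^ M := by rw [← pow_mul, hk₂m]
      have h4 : (σ₂ (w ^ k₂)) ^ m₂ = u ^ M := by rw [hσ₂wu, ← pow_mul, hk₂m]
      rw [h2, h4, hσ₂wu] at h
      exact h
    -- norm bounds for the points fed to Ψ
    have hnormpt : ∀ (A : ℝ → ℝ) (T ρT : ℝ), 0 ≤ T → T ≤ Tm →
        (∀ y : ℝ, 0 ≤ y → y ≤ ρT → |A y| ≤ T * y ^ M) → ε ≤ ρT / Bm →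
        ∀ x : ℝ, 0 ≤ x → x ≤ Bm * s → ‖((A x, x ^ M) : ℝ × ℝ)‖ ≤ εΨ := by
      intro A T ρT hT0' hTTm hAb hερT x hx0 hxB
      have hxε : x ≤ Bm * ε := le_trans hxB (mul_le_mul_of_nonneg_left hsε hBm0.le)
      have hxρT : x ≤ ρT := by
        have h9 : Bm * ε ≤ ρT := by
          have h8 := mul_le_mul_of_nonneg_left hερT hBm0.le
          calc Bm * ε ≤ Bm * (ρT/Bm) := h8
          _ = ρT := by field_simp
        linarith only [h9, hxε]
      have hx1 : x ≤ 1 := by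
        have h9 : Bm * ε ≤ 1 := by
          have := mul_le_mul_of_nonneg_left r9 hBm0.le
          calc Bm * ε ≤ Bm * (1/Bm) := this
          _ = 1 := by field_simp
        linarith only [h9, hxε]
      have hxM : x ^ M ≤ x := by
        calc x ^ M ≤ x ^ 1 := pow_le_pow_of_le_one hx0 hx1 hMpos
        _ = x := pow_one _
      have hxMn : (0:ℝ) ≤ x ^ M := by positivity
      have hεb : (Tm + 1) * (Bm * ε) ≤ εΨ := by
        have := mul_le_mul_of_nonneg_left r10 (by positivity : (0:ℝ) ≤ (Tm+1)*Bm)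
        calc (Tm + 1) * (Bm * ε) = ((Tm+1)*Bm) * ε := by ring
        _ ≤ ((Tm+1)*Bm) * (εΨ/((Tm+1)*Bm)) := this
        _ = εΨ := by
            field_simp
      rw [Prod.norm_def]
      apply max_le
      · simp only [Real.norm_eq_abs]
        calc |A x| ≤ T * x ^ M := hAb x hx0 hxρT
        _ ≤ Tm * x := by
            have e1 : T * x ^ M ≤ Tm * x ^ M := mul_le_mul_of_nonneg_right hTTm hxMn
            have e2 : Tm * x ^ M ≤ Tm * x := mul_le_mul_of_nonneg_left hxM hTm0
            linarith only [e1, e2]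
        _ ≤ Tm * (Bm * ε) := mul_le_mul_of_nonneg_left hxε hTm0
        _ ≤ (Tm + 1) * (Bm * ε) :=
            mul_le_mul_of_nonneg_right (by linarith only [hTm0])
              (mul_nonneg hBm0.le hε0.le)
        _ ≤ εΨ := hεb
      · simp only [Real.norm_eq_abs]
        rw [abs_of_nonneg hxMn]
        calc x ^ M ≤ x := hxM
        _ ≤ Bm * ε := hxε
        _ = 1 * (Bm * ε) := (one_mul _).symm
        _ ≤ (Tm + 1) * (Bm * ε) :=
            mul_le_mul_of_nonneg_right (by linarith only [hTm0])
              (mul_nonneg hBm0.le hε0.le)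
        _ ≤ εΨ := hεb
    have hn₁u : ‖((A₁ u, u ^ M) : ℝ × ℝ)‖ ≤ εΨ :=
      hnormpt A₁ T₁ ρT₁ hT₁0 (le_max_left _ _) hT₁ r7 u hu0 huBm
    have hn₂u : ‖((A₂ u, u ^ M) : ℝ × ℝ)‖ ≤ εΨ :=
      hnormpt A₂ T₂ ρT₂ hT₂0 (le_max_right _ _) hT₂ r8 u hu0 huBm
    have hn₂u₂ : ‖((A₂ u₂, u₂ ^ M) : ℝ × ℝ)‖ ≤ εΨ :=
      hnormpt A₂ T₂ ρT₂ hT₂0 (le_max_right _ _) hT₂ r8 u₂ hu₂0 hu₂Bm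
    -- norms of vertical differences
    have hvert : ∀ x y z : ℝ, ‖((x, z) : ℝ × ℝ) - (y, z)‖ = |x - y| := by
      intro x y z
      rw [Prod.mk_sub_mk, Prod.norm_def]
      simp [Real.norm_eq_abs, sub_self, abs_nonneg]
    refine ⟨u, hβu, huBm, ?_, ?_⟩
    · -- lower bound
      have hΨlow := (hΨb (A₁ u, u ^ M) (A₂ u₂, u₂ ^ M) hn₁u hn₂u₂).1
      rw [← hE₁, ← hE₂] at hΨlow
      have hΨeq : ‖((A₁' s, s ^ M) : ℝ × ℝ) - (A₂' s, s ^ M)‖ = |ΔA' s| := hvert _ _ _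
      rw [hΨeq] at hΨlow
      set dd := ‖((A₁ u, u ^ M) : ℝ × ℝ) - (A₂ u₂, u₂ ^ M)‖ with hdd
      have h5 : |A₁ u - A₂ u₂| ≤ dd := by
        have := norm_fst_le (((A₁ u, u ^ M) : ℝ × ℝ) - (A₂ u₂, u₂ ^ M))
        simpa [Prod.mk_sub_mk, Real.norm_eq_abs, hdd] using this
      have h6 : |u ^ M - u₂ ^ M| ≤ dd := by
        have := norm_snd_le (((A₁ u, u ^ M) : ℝ × ℝ) - (A₂ u₂, u₂ ^ M))
        simpa [Prod.mk_sub_mk, Real.norm_eq_abs, hdd] using this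
      have huρ₂ : u ≤ ρ₂ := by
        have h9 : Bm * ε ≤ ρ₂ := by
          have := mul_le_mul_of_nonneg_left r6 hBm0.le
          calc Bm * ε ≤ Bm * (ρ₂/Bm) := this
          _ = ρ₂ := by field_simp
        calc u ≤ Bm * s := huBm
        _ ≤ Bm * ε := mul_le_mul_of_nonneg_left hsε hBm0.le
        _ ≤ ρ₂ := h9
      have hu₂ρ₂ : u₂ ≤ ρ₂ := by
        have h9 : Bm * ε ≤ ρ₂ := by
          have := mul_le_mul_of_nonneg_left r6 hBm0.le
          calc Bm * ε ≤ Bm * (ρ₂/Bm) := this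
          _ = ρ₂ := by field_simp
        calc u₂ ≤ Bm * s := hu₂Bm
        _ ≤ Bm * ε := mul_le_mul_of_nonneg_left hsε hBm0.le
        _ ≤ ρ₂ := h9
      have h7 : |A₂ u₂ - A₂ u| ≤ L₂ * |u₂ ^ M - u ^ M| := by
        rcases le_total u u₂ with h | h
        · have := hL₂ u u₂ hu0 h hu₂ρ₂
          have hmono : u ^ M ≤ u₂ ^ M := pow_le_pow_left₀ hu0 h _
          rw [abs_of_nonneg (show (0:ℝ) ≤ u₂ ^ M - u ^ M by linarith only [hmono])]
          exact this
        · have := hL₂ u₂ u hu₂0 h huρ₂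
          have hmono : u₂ ^ M ≤ u ^ M := pow_le_pow_left₀ hu₂0 h _
          rw [abs_sub_comm (A₂ u₂), abs_sub_comm (u₂ ^ M),
            abs_of_nonneg (show (0:ℝ) ≤ u ^ M - u₂ ^ M by linarith only [hmono])]
          exact this
      have h8 : |ΔA u| ≤ (1 + L₂) * dd := by
        have htri : |A₁ u - A₂ u| ≤ |A₁ u - A₂ u₂| + |A₂ u₂ - A₂ u| := abs_sub_le _ _ _
        have habs2 : |u₂ ^ M - u ^ M| = |u ^ M - u₂ ^ M| := abs_sub_comm _ _
        have hdd0 : 0 ≤ dd := norm_nonneg _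
        calc |ΔA u| = |A₁ u - A₂ u| := rfl
        _ ≤ |A₁ u - A₂ u₂| + |A₂ u₂ - A₂ u| := htri
        _ ≤ dd + L₂ * |u₂ ^ M - u ^ M| := by linarith only [h5, h7]
        _ ≤ dd + L₂ * dd := by
            rw [habs2]
            have := mul_le_mul_of_nonneg_left h6 hL₂0
            linarith only [this]
        _ = (1 + L₂) * dd := by ring
      -- conclude
      rw [inv_mul_le_iff₀ hC0]
      have hdd' : dd ≤ KΨ * |ΔA' s| := by
        rw [inv_mul_le_iff₀ hKΨ0] at hΨlow
        exact hΨlow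
      calc |ΔA u| ≤ (1 + L₂) * dd := h8
      _ ≤ (1 + L₂) * (KΨ * |ΔA' s|) :=
          mul_le_mul_of_nonneg_left hdd' (by linarith only [hL₂0])
      _ = (KΨ * (1 + L₂)) * |ΔA' s| := by ring
      _ ≤ C * |ΔA' s| :=
          mul_le_mul_of_nonneg_right (le_max_left _ _) (abs_nonneg _)
    · -- upper bound
      have hΨup := (hΨb (A₁ u, u ^ M) (A₂ u, u ^ M) hn₁u hn₂u).2
      have hvv : ‖((A₁ u, u ^ M) : ℝ × ℝ) - (A₂ u, u ^ M)‖ = |ΔA u| := hvert _ _ _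
      rw [hvv, ← hE₁, ← hE₃] at hΨup
      set dd' := ‖((A₁' s, s ^ M) : ℝ × ℝ) - (A₂' w, w ^ M)‖ with hdd'
      have h5 : |A₁' s - A₂' w| ≤ dd' := by
        have := norm_fst_le (((A₁' s, s ^ M) : ℝ × ℝ) - (A₂' w, w ^ M))
        simpa [Prod.mk_sub_mk, Real.norm_eq_abs, hdd'] using this
      have h6 : |s ^ M - w ^ M| ≤ dd' := by
        have := norm_snd_le (((A₁' s, s ^ M) : ℝ × ℝ) - (A₂' w, w ^ M))
        simpa [Prod.mk_sub_mk, Real.norm_eq_abs, hdd'] using this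
      have hsρ₂' : s ≤ ρ₂' := le_trans hsε (le_trans r5 hδ₀ρ₂')
      have hwρ₂' : w ≤ ρ₂' := le_trans hwδ₀ hδ₀ρ₂'
      have h7 : |A₂' w - A₂' s| ≤ L₂' * |w ^ M - s ^ M| := by
        rcases le_total s w with h | h
        · have := hL₂' s w hs.le h hwρ₂'
          have hmono : s ^ M ≤ w ^ M := pow_le_pow_left₀ hs.le h _
          rw [abs_of_nonneg (show (0:ℝ) ≤ w ^ M - s ^ M by linarith only [hmono])]
          exact this
        · have := hL₂' w s hw0 h hsρ₂'
          have hmono : w ^ M ≤ s ^ M := pow_le_pow_left₀ hw0 h _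
          rw [abs_sub_comm (A₂' w), abs_sub_comm (w ^ M),
            abs_of_nonneg (show (0:ℝ) ≤ s ^ M - w ^ M by linarith only [hmono])]
          exact this
      have habs2 : |w ^ M - s ^ M| = |s ^ M - w ^ M| := abs_sub_comm _ _
      have hdd'0 : 0 ≤ dd' := norm_nonneg _
      have h8 : |ΔA' s| ≤ (1 + L₂') * dd' := by
        have htri : |A₁' s - A₂' s| ≤ |A₁' s - A₂' w| + |A₂' w - A₂' s| := abs_sub_le _ _ _
        calc |ΔA' s| = |A₁' s - A₂' s| := rfl
        _ ≤ |A₁' s - A₂' w| + |A₂' w - A₂' s| := htri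
        _ ≤ dd' + L₂' * |w ^ M - s ^ M| := by linarith only [h5, h7]
        _ ≤ dd' + L₂' * dd' := by
            rw [habs2]
            have := mul_le_mul_of_nonneg_left h6 hL₂'0
            linarith only [this]
        _ = (1 + L₂') * dd' := by ring
      calc |ΔA' s| ≤ (1 + L₂') * dd' := h8
      _ ≤ (1 + L₂') * (KΨ * |ΔA u|) := mul_le_mul_of_nonneg_left hΨup (by linarith only [hL₂'0])
      _ = ((1 + L₂') * KΨ) * |ΔA u| := by ring
      _ ≤ C * |ΔA u| := mul_le_mul_of_nonneg_right (le_max_right _ _) (abs_nonneg _)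
  obtain ⟨ε, hε0, Bm, hBm1, β, hβ0, C, hC1, hmain⟩ := main
  have hC0 : (0:ℝ) < C := lt_of_lt_of_le one_pos hC1
  have hBm0 : (0:ℝ) < Bm := lt_of_lt_of_le one_pos hBm1
  -- final comparison
  have hfin : sInf {j : ℕ | stretch k₁ a₁' j ≠ stretch k₂ a₂' j}
      = sInf {j : ℕ | stretch k₁ a₁ j ≠ stretch k₂ a₂ j} := by
    by_cases hS : {j : ℕ | stretch k₁ a₁ j ≠ stretch k₂ a₂ j}.Nonempty
    · set N := sInf {j : ℕ | stretch k₁ a₁ j ≠ stretch k₂ a₂ j} with hN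
      have hDN : D N ≠ 0 := sub_ne_zero_of_ne (Nat.sInf_mem hS)
      have hDvan : ∀ j < N, D j = 0 := by
        intro j hj
        have : j ∉ {j : ℕ | stretch k₁ a₁ j ≠ stretch k₂ a₂ j} :=
          Nat.notMem_of_lt_sInf hj
        simp only [Set.mem_setOf_eq, not_not] at this
        simp [hDdef, this]
      obtain ⟨εA, hεA0, hA⟩ := ord_asymp hΔA hDN hDvan
      -- S' is nonempty
      have hS' : {j : ℕ | stretch k₁ a₁' j ≠ stretch k₂ a₂' j}.Nonempty := by
        by_contra h'
        rw [Set.not_nonempty_iff_eq_empty] at h'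
        have hD'0 : ∀ j, D' j = 0 := by
          intro j
          have : j ∉ ({j : ℕ | stretch k₁ a₁' j ≠ stretch k₂ a₂' j}) := by
            rw [h']; exact Set.notMem_empty _
          simp only [Set.mem_setOf_eq, not_not] at this
          simp [hD'def, this]
        obtain ⟨r', hr', hsum'⟩ := hΔA'
        set s₀ := min (min ε (εA / Bm)) (r'/2) with hs₀def
        have hs₀0 : 0 < s₀ :=
          lt_min (lt_min hε0 (by positivity)) (by linarith)
        obtain ⟨u, hu1, hu2, hlow, hup⟩ :=
          hmain s₀ hs₀0 (le_trans (min_le_left _ _) (min_le_left _ _))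
        have hΔA's₀ : ΔA' s₀ = 0 := by
          have h := hsum' s₀ (by
            rw [abs_of_pos hs₀0]
            calc s₀ ≤ r'/2 := min_le_right _ _
            _ < r' := by linarith)
          have h0 : HasSum (fun j => D' j * s₀ ^ j) 0 := by
            have : (fun j => D' j * s₀ ^ j) = fun _ => (0:ℝ) := by
              funext j; rw [hD'0 j, zero_mul]
            rw [this]
            exact hasSum_zero
          exact h.unique h0
        have hupos : 0 < u := lt_of_lt_of_le (by positivity) hu1
        have huεA : u ≤ εA := by
          have h1 : s₀ ≤ εA / Bm := le_trans (min_le_left _ _) (min_le_right _ _)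
          calc u ≤ Bm * s₀ := hu2
          _ ≤ Bm * (εA / Bm) := mul_le_mul_of_nonneg_left h1 hBm0.le
          _ = εA := by field_simp
        have h1 := (hA u hupos huεA).1
        rw [hΔA's₀, abs_zero] at hlow
        have h2 : 0 < |D N| / 2 * u ^ N := by
          have : 0 < |D N| := abs_pos.mpr hDN
          positivity
        have h3 : 0 < C⁻¹ * |ΔA u| := by
          have : 0 < |ΔA u| := lt_of_lt_of_le h2 h1
          positivity
        linarith only [hlow, h3]
      set N' := sInf {j : ℕ | stretch k₁ a₁' j ≠ stretch k₂ a₂' j} with hN'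
      have hD'N : D' N' ≠ 0 := sub_ne_zero_of_ne (Nat.sInf_mem hS')
      have hD'van : ∀ j < N', D' j = 0 := by
        intro j hj
        have : j ∉ {j : ℕ | stretch k₁ a₁' j ≠ stretch k₂ a₂' j} :=
          Nat.notMem_of_lt_sInf hj
        simp only [Set.mem_setOf_eq, not_not] at this
        simp [hD'def, this]
      obtain ⟨εA', hεA'0, hA'⟩ := ord_asymp hΔA' hD'N hD'van
      -- sandwich
      have hcomp : ∀ s : ℝ, 0 < s → s ≤ min (min ε εA') (εA / Bm) →
          (C⁻¹ * (|D N| / 2) * β ^ N) * s ^ N ≤ (|D' N'| + 1) * s ^ N' ∧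
          (|D' N'| / 2) * s ^ N' ≤ (C * (|D N| + 1) * Bm ^ N) * s ^ N := by
        intro s hs hsε
        have hsε' : s ≤ ε := le_trans hsε (le_trans (min_le_left _ _) (min_le_left _ _))
        have hsεA' : s ≤ εA' := le_trans hsε (le_trans (min_le_left _ _) (min_le_right _ _))
        have hsεAB : s ≤ εA / Bm := le_trans hsε (min_le_right _ _)
        obtain ⟨u, hu1, hu2, hlow, hup⟩ := hmain s hs hsε'
        have hupos : 0 < u := lt_of_lt_of_le (by positivity) hu1
        have huεA : u ≤ εA := by
          calc u ≤ Bm * s := hu2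
          _ ≤ Bm * (εA / Bm) := mul_le_mul_of_nonneg_left hsεAB hBm0.le
          _ = εA := by field_simp
        obtain ⟨hAl, hAu⟩ := hA u hupos huεA
        obtain ⟨hA'l, hA'u⟩ := hA' s hs hsεA'
        constructor
        · have h1 : (β * s) ^ N ≤ u ^ N := pow_le_pow_left₀ (by positivity) hu1 _
          have h2 : C⁻¹ * (|D N| / 2 * (β * s) ^ N) ≤ C⁻¹ * |ΔA u| := by
            apply mul_le_mul_of_nonneg_left _ (by positivity)
            calc |D N| / 2 * (β * s) ^ N ≤ |D N| / 2 * u ^ N :=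
                  mul_le_mul_of_nonneg_left h1 (by positivity)
            _ ≤ |ΔA u| := hAl
          calc (C⁻¹ * (|D N| / 2) * β ^ N) * s ^ N
              = C⁻¹ * (|D N| / 2 * (β * s) ^ N) := by rw [mul_pow]; ring
          _ ≤ C⁻¹ * |ΔA u| := h2
          _ ≤ |ΔA' s| := hlow
          _ ≤ (|D' N'| + 1) * s ^ N' := hA'u
        · have h1 : u ^ N ≤ (Bm * s) ^ N := pow_le_pow_left₀ hupos.le hu2 _
          calc (|D' N'| / 2) * s ^ N' ≤ |ΔA' s| := hA'l
          _ ≤ C * |ΔA u| := hup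
          _ ≤ C * ((|D N| + 1) * u ^ N) := mul_le_mul_of_nonneg_left hAu hC0.le
          _ ≤ C * ((|D N| + 1) * (Bm * s) ^ N) := by
              apply mul_le_mul_of_nonneg_left _ hC0.le
              apply mul_le_mul_of_nonneg_left h1 (by positivity)
          _ = (C * (|D N| + 1) * Bm ^ N) * s ^ N := by rw [mul_pow]; ring
      exact (pow_exponent_eq (lt_min (lt_min hε0 hεA'0) (by positivity))
        (by positivity)
        (by positivity)
        (fun s hs hsε => hcomp s hs hsε)).symm ▸ rfl
    · -- empty case
      rw [Set.not_nonempty_iff_eq_empty] at hS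
      have hD0 : ∀ j, D j = 0 := by
        intro j
        have : j ∉ ({j : ℕ | stretch k₁ a₁ j ≠ stretch k₂ a₂ j}) := by
          rw [hS]; exact Set.notMem_empty _
        simp only [Set.mem_setOf_eq, not_not] at this
        simp [hDdef, this]
      obtain ⟨r, hr, hsum⟩ := hΔA
      have hvanΔ : ∀ x : ℝ, |x| < r → ΔA x = 0 := by
        intro x hx
        have h := hsum x hx
        have h0 : HasSum (fun j => D j * x ^ j) 0 := by
          have : (fun j => D j * x ^ j) = fun _ => (0:ℝ) := by
            funext j; rw [hD0 j, zero_mul]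
          rw [this]
          exact hasSum_zero
        exact h.unique h0
      have hε₀0 : 0 < min ε (r / (2 * Bm)) := lt_min hε0 (by positivity)
      have hvan' : ∀ x : ℝ, 0 < x → x ≤ min ε (r / (2 * Bm)) → ΔA' x = 0 := by
        intro x hx hxε
        obtain ⟨u, hu1, hu2, hlow, hup⟩ := hmain x hx (le_trans hxε (min_le_left _ _))
        have hu0 : 0 ≤ u := le_trans (by positivity) hu1
        have hur : |u| < r := by
          rw [abs_of_nonneg hu0]
          calc u ≤ Bm * x := hu2
          _ ≤ Bm * (r / (2 * Bm)) := mul_le_mul_of_nonneg_left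
              (le_trans hxε (min_le_right _ _)) hBm0.le
          _ = r/2 := by field_simp
          _ < r := by linarith
        rw [hvanΔ u hur, abs_zero, mul_zero] at hup
        have := abs_nonneg (ΔA' x)
        exact abs_eq_zero.mp (le_antisymm hup this)
      have hD'0 := coeff_eq_zero_of_vanish hΔA' hε₀0 hvan'
      have hS'e : {j : ℕ | stretch k₁ a₁' j ≠ stretch k₂ a₂' j} = ∅ := by
        ext j
        simp only [Set.mem_setOf_eq, Set.mem_empty_iff_false, iff_false, not_not]
        have := hD'0 j
        simp only [hD'def] at this
        linarith [this]
      rw [hS, hS'e]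
  have : contactOrd m₁ m₂ a₁' a₂' =
      ((sInf {j : ℕ | stretch k₁ a₁' j ≠ stretch k₂ a₂' j} : ℕ) : ℚ) / (M : ℚ) := rfl
  rw [this, hfin]
  rfl
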